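/- For every nonnegative integer n, f_n = δ(n+2,2), where f_n is the n-th Fibonacci number with the convention f_0 = f_1 = 1 and f_n = f_{n−1} + f_{n−2} for n ≥ 2. -/

import Mathlib

/-- The integer encoded (in binary, most significant digit first) by the `i`-th row
of the binary matrix `A`, i.e. `x_i = ∑_j a_{ij} 2^{m-j}` (1-indexed). -/
def rowVal {n m : ℕ} (A : Fin n → Fin m → Fin 2) (i : Fin n) : ℕ :=
  ∑ j : Fin m, (A i j : ℕ) * 2 ^ (m - 1 - (j : ℕ))

/-- The integer encoded by the `j`-th column of `A`, i.e. `y_j = ∑_i a_{ij} 2^{n-i}`. -/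
def colVal {n m : ℕ} (A : Fin n → Fin m → Fin 2) (j : Fin m) : ℕ :=
  ∑ i : Fin n, (A i j : ℕ) * 2 ^ (n - 1 - (i : ℕ))

/-- `A ∈ 𝔠_{n×m}`: rows and columns sorted in lexicographically nondecreasing order. -/
def memC {n m : ℕ} (A : Fin n → Fin m → Fin 2) : Prop :=
  Monotone (rowVal A) ∧ Monotone (colVal A)

/-- `A ∈ 𝔡_{n×m}`: rows and columns sorted in lexicographically nonincreasing order. -/
def memD {n m : ℕ} (A : Fin n → Fin m → Fin 2) : Prop :=
  Antitone (rowVal A) ∧ Antitone (colVal A)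

/-- `Λ_n^k`: n×n binary matrices with exactly `k` ones in each row and each column. -/
def lambdaSet (n k : ℕ) : Set (Fin n → Fin n → Fin 2) :=
  {A | (∀ i, ∑ j, (A i j : ℕ) = k) ∧ (∀ j, ∑ i, (A i j : ℕ) = k)}

/-- `Γ_n^k = 𝔠_{n×n} ∩ Λ_n^k`. -/
def GammaSet (n k : ℕ) : Set (Fin n → Fin n → Fin 2) :=
  {A | memC A} ∩ lambdaSet n k

/-- `Δ_n^k = 𝔡_{n×n} ∩ Λ_n^k`. -/
def DeltaSet (n k : ℕ) : Set (Fin n → Fin n → Fin 2) :=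
  {A | memD A} ∩ lambdaSet n k

/-- `γ(n,k) = |Γ_n^k|`. -/
noncomputable def gammaCard (n k : ℕ) : ℕ := (GammaSet n k).ncard

/-- `δ(n,k) = |Δ_n^k|`. -/
noncomputable def deltaCard (n k : ℕ) : ℕ := (DeltaSet n k).ncard

/-- The Fibonacci sequence with the convention `f_0 = f_1 = 1`. -/
def fibP : ℕ → ℕ
  | 0 => 1
  | 1 => 1
  | n + 2 => fibP (n + 1) + fibP n


/-- value of a binary row vector -/
def rv (m : ℕ) (r : Fin m → Fin 2) : ℕ := ∑ j : Fin m, (r j : ℕ) * 2 ^ (m - 1 - (j : ℕ))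

lemma rv_succ (m : ℕ) (r : Fin (m + 1) → Fin 2) :
    rv (m + 1) r = (r 0 : ℕ) * 2 ^ m + rv m (r ∘ Fin.succ) := by
  rw [rv, Fin.sum_univ_succ]
  simp only [Fin.val_zero, Nat.sub_zero, Nat.add_sub_cancel]
  congr 1
  rw [rv]
  apply Finset.sum_congr rfl
  intro j _
  simp only [Function.comp_apply, Fin.val_succ]
  congr 2
  omega

lemma rv_lt_of_zero {m : ℕ} (r : Fin m → Fin 2) (k : ℕ)
    (h : ∀ j : Fin m, (j : ℕ) < k → r j = 0) : rv m r < 2 ^ (m - k) := by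
  induction m generalizing k with
  | zero => simp [rv, Nat.zero_sub]
  | succ m ih =>
    rw [rv_succ]
    rcases Nat.eq_zero_or_pos k with hk | hk
    · subst hk
      have h1 : rv m (r ∘ Fin.succ) < 2 ^ (m - 0) := ih _ 0 (by simp)
      have h2 : (r 0 : ℕ) ≤ 1 := Fin.is_le _
      simp only [Nat.sub_zero] at h1 ⊢
      have : (r 0 : ℕ) * 2 ^ m ≤ 2 ^ m := by nlinarith
      calc (r 0 : ℕ) * 2 ^ m + rv m (r ∘ Fin.succ) < 2 ^ m + 2 ^ m := by omega
        _ = 2 ^ (m + 1) := by ring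
    · have h0 : r 0 = 0 := h 0 (by simpa using hk)
      have h1 : rv m (r ∘ Fin.succ) < 2 ^ (m - (k - 1)) := by
        apply ih _ (k - 1)
        intro j hj
        exact h j.succ (by simp; omega)
      rw [h0]
      simp only [Fin.val_zero, Nat.zero_mul, Nat.zero_add]
      calc rv m (r ∘ Fin.succ) < 2 ^ (m - (k - 1)) := h1
        _ ≤ 2 ^ (m + 1 - k) := Nat.pow_le_pow_right (by norm_num) (by omega)

lemma rv_lt {m : ℕ} (r : Fin m → Fin 2) : rv m r < 2 ^ m := by
  simpa using rv_lt_of_zero r 0 (by simp)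

lemma rv_ge {m : ℕ} (r : Fin m → Fin 2) (j : Fin m) (hj : r j = 1) :
    2 ^ (m - 1 - (j : ℕ)) ≤ rv m r := by
  rw [rv]
  calc 2 ^ (m - 1 - (j : ℕ)) = (r j : ℕ) * 2 ^ (m - 1 - (j : ℕ)) := by rw [hj]; simp
    _ ≤ _ := Finset.single_le_sum (f := fun j => (r j : ℕ) * 2 ^ (m - 1 - (j : ℕ)))
      (fun _ _ => Nat.zero_le _) (Finset.mem_univ j)

lemma rv_eq_pair {m : ℕ} (r : Fin m → Fin 2) (a b : Fin m) (hab : a ≠ b)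
    (ha : r a = 1) (hb : r b = 1) (h0 : ∀ j, j ≠ a → j ≠ b → r j = 0) :
    rv m r = 2 ^ (m - 1 - (a : ℕ)) + 2 ^ (m - 1 - (b : ℕ)) := by
  rw [rv]
  rw [show (Finset.univ : Finset (Fin m)) = insert a (insert b (Finset.univ \ {a, b})) from ?_]
  · rw [Finset.sum_insert, Finset.sum_insert]
    · have : ∑ j ∈ Finset.univ \ {a, b}, (r j : ℕ) * 2 ^ (m - 1 - (j : ℕ)) = 0 := by
        apply Finset.sum_eq_zero
        intro j hj
        simp only [Finset.mem_sdiff, Finset.mem_insert, Finset.mem_singleton] at hj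
        rw [h0 j (fun h => hj.2 (Or.inl h)) (fun h => hj.2 (Or.inr h))]
        simp
      rw [this, ha, hb]; simp
    · simp
    · simp only [Finset.mem_insert, Finset.mem_sdiff, Finset.mem_univ, Finset.mem_singleton,
        true_and]
      tauto
  · ext j
    simp only [Finset.mem_insert, Finset.mem_sdiff, Finset.mem_univ, Finset.mem_singleton,
      true_and, Finset.mem_insert]
    by_cases h1 : j = a <;> by_cases h2 : j = b <;> simp [h1, h2]

lemma fin2_cases (a : Fin 2) : a = 0 ∨ a = 1 := by omega

lemma fin2_eq_one_of_ne (a : Fin 2) (h : (a : ℕ) ≠ 0) : a = 1 := by omega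

lemma sum_exists_one {m : ℕ} (r : Fin m → Fin 2) (h : ∑ j, (r j : ℕ) = 2) :
    ∃ a, r a = 1 := by
  by_contra hc
  push_neg at hc
  have : ∑ j, (r j : ℕ) = 0 := by
    apply Finset.sum_eq_zero
    intro j _
    have := hc j
    omega
  omega

lemma sum_two_ones {m : ℕ} (r : Fin m → Fin 2) (h : ∑ j, (r j : ℕ) = 2)
    (a : Fin m) (ha : r a = 1) :
    ∃ b, b ≠ a ∧ r b = 1 ∧ ∀ j, j ≠ a → j ≠ b → r j = 0 := by
  have h1 : ∑ j ∈ Finset.univ.erase a, (r j : ℕ) = 1 := by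
    have := Finset.add_sum_erase Finset.univ (fun j => (r j : ℕ)) (Finset.mem_univ a)
    rw [ha] at this
    simp only [Fin.val_one] at this
    omega
  have h2 : ∃ b ∈ Finset.univ.erase a, (r b : ℕ) ≠ 0 := by
    by_contra hc
    push_neg at hc
    have : ∑ j ∈ Finset.univ.erase a, (r j : ℕ) = 0 := Finset.sum_eq_zero hc
    omega
  obtain ⟨b, hb, hb0⟩ := h2
  have hbne : b ≠ a := Finset.ne_of_mem_erase hb
  refine ⟨b, hbne, fin2_eq_one_of_ne _ hb0, ?_⟩
  have h3 : ∑ j ∈ (Finset.univ.erase a).erase b, (r j : ℕ) = 0 := by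
    have h4 := Finset.add_sum_erase (Finset.univ.erase a) (fun j => (r j : ℕ)) hb
    omega
  intro j hja hjb
  have : j ∈ (Finset.univ.erase a).erase b := by
    simp [Finset.mem_erase, hja, hjb]
  have := Finset.sum_eq_zero_iff.mp h3 j this
  omega

lemma sum_succ_split {m : ℕ} (r : Fin (m + 1) → Fin 2) :
    ∑ j, (r j : ℕ) = (r 0 : ℕ) + ∑ j : Fin m, (r j.succ : ℕ) :=
  Fin.sum_univ_succ _

lemma fin_eq_of_val {m : ℕ} {a b : Fin m} (h : (a : ℕ) = (b : ℕ)) : a = b := Fin.ext h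

lemma fin_le_of_val {m : ℕ} {a b : Fin m} (h : (a : ℕ) ≤ (b : ℕ)) : a ≤ b := h

lemma rowVal_eq_rv {n m : ℕ} (A : Fin n → Fin m → Fin 2) (i : Fin n) :
    rowVal A i = rv m (A i) := rfl

lemma colVal_eq_rv {n m : ℕ} (A : Fin n → Fin m → Fin 2) (j : Fin m) :
    colVal A j = rv n (fun i => A i j) := rfl

/-- transpose -/
def tr {n : ℕ} (A : Fin n → Fin n → Fin 2) : Fin n → Fin n → Fin 2 := fun i j => A j i

lemma rowVal_tr {n : ℕ} (A : Fin n → Fin n → Fin 2) : rowVal (tr A) = colVal A := rfl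

lemma colVal_tr {n : ℕ} (A : Fin n → Fin n → Fin 2) : colVal (tr A) = rowVal A := rfl

lemma tr_mem_Delta {n k : ℕ} (A : Fin n → Fin n → Fin 2) (h : A ∈ DeltaSet n k) :
    tr A ∈ DeltaSet n k := by
  obtain ⟨⟨h1, h2⟩, h3, h4⟩ := h
  exact ⟨⟨by rw [rowVal_tr]; exact h2, by rw [colVal_tr]; exact h1⟩, h4, h3⟩

/-- `A 0 0 = 1` for matrices in `Δ`. -/
lemma entry00 {m : ℕ} (A : Fin (m + 1) → Fin (m + 1) → Fin 2)
    (h : A ∈ DeltaSet (m + 1) 2) : A 0 0 = 1 := by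
  obtain ⟨⟨hr, hc⟩, hΛr, hΛc⟩ := h
  by_contra hne
  have h00 : A 0 0 = 0 := by omega
  obtain ⟨a, ha⟩ := sum_exists_one (A 0) (hΛr 0)
  have hcol0 : colVal A 0 < 2 ^ m := by
    rw [colVal_eq_rv]
    have := rv_lt_of_zero (m := m + 1) (fun i => A i 0) 1 ?_
    · simpa using this
    · intro j hj
      have : j = 0 := fin_eq_of_val (by simpa using hj)
      rw [this]; exact h00
  have hcola : 2 ^ m ≤ colVal A a := by
    rw [colVal_eq_rv]
    have := rv_ge (m := m + 1) (fun i => A i a) 0 ha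
    simpa using this
  have := hc (Fin.zero_le a)
  omega

/-- `A 0 1 = 1` and `A 0 j = 0` for `j ≥ 2`. -/
lemma row0_struct {m : ℕ} (A : Fin (m + 2) → Fin (m + 2) → Fin 2)
    (h : A ∈ DeltaSet (m + 2) 2) :
    A 0 1 = 1 ∧ ∀ j : Fin (m + 2), 2 ≤ (j : ℕ) → A 0 j = 0 := by
  have h00 : A 0 0 = 1 := entry00 A h
  obtain ⟨⟨hr, hc⟩, hΛr, hΛc⟩ := h
  obtain ⟨b, hb0, hb1, hbz⟩ := sum_two_ones (A 0) (hΛr 0) 0 h00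
  have hb : b = 1 := by
    by_contra hbne
    have hb2 : 2 ≤ (b : ℕ) := by
      have h5 : (b : ℕ) ≠ 0 := fun hh => hb0 (fin_eq_of_val (by simpa using hh))
      have h6 : (b : ℕ) ≠ 1 := fun hh => hbne (fin_eq_of_val (by simpa using hh))
      omega
    have hcolb : 2 ^ (m + 1) ≤ colVal A b := by
      rw [colVal_eq_rv]
      have := rv_ge (m := m + 2) (fun i => A i b) 0 hb1
      simpa using this
    have hA01 : A 0 1 = 0 := by
      apply hbz 1
      · intro hh; exact absurd (congrArg Fin.val hh) (by simp)
      · intro hh; rw [← hh, Fin.val_one] at hb2; omega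
    have hcol1 : colVal A 1 < 2 ^ (m + 1) := by
      rw [colVal_eq_rv]
      have := rv_lt_of_zero (m := m + 2) (fun i => A i 1) 1 ?_
      · simpa using this
      · intro j hj
        have : j = 0 := fin_eq_of_val (by simpa using hj)
        rw [this]; exact hA01
    have hle : (1 : Fin (m + 2)) ≤ b := fin_le_of_val (by rw [Fin.val_one]; omega)
    have := hc hle
    omega
  subst hb
  refine ⟨hb1, fun j hj => ?_⟩
  apply hbz j
  · intro hh; rw [hh] at hj; simp at hj
  · intro hh; rw [hh, Fin.val_one] at hj; omega


lemma col0_struct {m : ℕ} (A : Fin (m + 2) → Fin (m + 2) → Fin 2)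
    (h : A ∈ DeltaSet (m + 2) 2) :
    A 1 0 = 1 ∧ ∀ i : Fin (m + 2), 2 ≤ (i : ℕ) → A i 0 = 0 :=
  row0_struct (tr A) (tr_mem_Delta A h)

lemma rv_succ2 (m : ℕ) (r : Fin (m + 2) → Fin 2) :
    rv (m + 2) r = (r 0 : ℕ) * 2 ^ (m + 1) + (r 1 : ℕ) * 2 ^ m
      + rv m (fun j => r j.succ.succ) := by
  rw [rv_succ, rv_succ]
  simp only [Function.comp_apply, Fin.succ_zero_eq_one, Function.comp_def, Nat.add_assoc]

lemma sum_succ2 {m : ℕ} (r : Fin (m + 2) → Fin 2) :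
    ∑ j, (r j : ℕ) = (r 0 : ℕ) + (r 1 : ℕ) + ∑ j : Fin m, (r j.succ.succ : ℕ) := by
  rw [Fin.sum_univ_succ, Fin.sum_univ_succ]
  simp only [Fin.succ_zero_eq_one, Nat.add_assoc]

def res2 {n : ℕ} (A : Fin (n + 2) → Fin (n + 2) → Fin 2) : Fin n → Fin n → Fin 2 :=
  fun i j => A ⟨(i : ℕ) + 2, by have := i.isLt; omega⟩ ⟨(j : ℕ) + 2, by have := j.isLt; omega⟩

def e2 {n : ℕ} (B : Fin n → Fin n → Fin 2) : Fin (n + 2) → Fin (n + 2) → Fin 2 :=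
  fun i j =>
    if hi : (i : ℕ) < 2 then (if (j : ℕ) < 2 then 1 else 0)
    else if hj : (j : ℕ) < 2 then 0
    else B ⟨(i : ℕ) - 2, by have := i.isLt; omega⟩ ⟨(j : ℕ) - 2, by have := j.isLt; omega⟩

def res1 {n : ℕ} (A : Fin (n + 2) → Fin (n + 2) → Fin 2) : Fin (n + 1) → Fin (n + 1) → Fin 2 :=
  fun i j => if i = 0 ∧ j = 0 then 1 else A i.succ j.succ

def e1 {n : ℕ} (B : Fin (n + 1) → Fin (n + 1) → Fin 2) : Fin (n + 2) → Fin (n + 2) → Fin 2 :=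
  fun i j =>
    if hi : (i : ℕ) = 0 then (if (j : ℕ) ≤ 1 then 1 else 0)
    else if hj : (j : ℕ) = 0 then (if (i : ℕ) ≤ 1 then 1 else 0)
    else if (i : ℕ) = 1 ∧ (j : ℕ) = 1 then 0
    else B ⟨(i : ℕ) - 1, by have := i.isLt; omega⟩ ⟨(j : ℕ) - 1, by have := j.isLt; omega⟩

lemma tr_e2 {n : ℕ} (B : Fin n → Fin n → Fin 2) : tr (e2 B) = e2 (tr B) := by
  funext i j
  simp only [tr, e2]
  split_ifs <;> first | rfl | omega

lemma tr_e1 {n : ℕ} (B : Fin (n + 1) → Fin (n + 1) → Fin 2) : tr (e1 B) = e1 (tr B) := by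
  funext i j
  simp only [tr, e1]
  split_ifs <;> first | rfl | omega

lemma res2_e2 {n : ℕ} (B : Fin n → Fin n → Fin 2) : res2 (e2 B) = B := by
  funext i j
  simp only [res2, e2]
  rw [dif_neg (by simp), dif_neg (by simp)]
  congr 1 <;> exact Fin.ext (by simp)

lemma res1_e1 {n : ℕ} (B : Fin (n + 1) → Fin (n + 1) → Fin 2)
    (hB : B ∈ DeltaSet (n + 1) 2) : res1 (e1 B) = B := by
  funext i j
  simp only [res1]
  split_ifs with h
  · rw [h.1, h.2]
    exact (entry00 B hB).symm
  · simp only [e1, Fin.val_succ]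
    rw [dif_neg (by omega), dif_neg (by omega), if_neg ?_]
    · congr 1 <;> exact Fin.ext (by simp)
    · intro ⟨h1, h2⟩
      apply h
      constructor <;> exact fin_eq_of_val (by simp only [Fin.val_zero]; omega)

lemma rv_zero {n : ℕ} (r : Fin n → Fin 2) (h : ∀ j, r j = 0) : rv n r = 0 := by
  rw [rv]; apply Finset.sum_eq_zero; intro j _; rw [h j]; simp

lemma val_one' {n : ℕ} : ((1 : Fin (n + 2)) : ℕ) = 1 := rfl

lemma e2_entry_tail {n : ℕ} (B : Fin n → Fin n → Fin 2) (i : Fin (n + 2)) (hi : 2 ≤ (i : ℕ))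
    (j : Fin n) : e2 B i j.succ.succ = B ⟨(i : ℕ) - 2, by have := i.isLt; omega⟩ j := by
  simp only [e2]
  rw [dif_neg (by omega), dif_neg (by simp [Fin.val_succ])]
  exact congrArg _ (Fin.ext (by simp [Fin.val_succ]))

lemma e2_rowVal_small {n : ℕ} (B : Fin n → Fin n → Fin 2) (i : Fin (n + 2))
    (hi : (i : ℕ) < 2) : rowVal (e2 B) i = 2 ^ (n + 1) + 2 ^ n := by
  rw [rowVal_eq_rv, rv_succ2]
  have h0 : e2 B i 0 = 1 := by
    simp only [e2]; rw [dif_pos hi, if_pos (by simp)]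
  have h1 : e2 B i 1 = 1 := by
    simp only [e2]; rw [dif_pos hi, if_pos (by rw [val_one']; omega)]
  have ht : rv n (fun j => e2 B i j.succ.succ) = 0 := by
    apply rv_zero
    intro j
    simp only [e2]; rw [dif_pos hi, if_neg (by simp [Fin.val_succ])]
  rw [h0, h1, ht]
  simp

lemma e2_rowVal_big {n : ℕ} (B : Fin n → Fin n → Fin 2) (i : Fin (n + 2))
    (hi : 2 ≤ (i : ℕ)) :
    rowVal (e2 B) i = rowVal B ⟨(i : ℕ) - 2, by have := i.isLt; omega⟩ := by
  rw [rowVal_eq_rv, rv_succ2]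
  have h0 : e2 B i 0 = 0 := by
    simp only [e2]; rw [dif_neg (by omega), dif_pos (by simp)]
  have h1 : e2 B i 1 = 0 := by
    simp only [e2]; rw [dif_neg (by omega), dif_pos (by rw [val_one']; omega)]
  rw [h0, h1]
  simp only [Fin.val_zero, Nat.zero_mul, Nat.zero_add]
  rw [rowVal_eq_rv]
  congr 1
  funext j
  exact e2_entry_tail B i hi j

lemma e2_rowSum_small {n : ℕ} (B : Fin n → Fin n → Fin 2) (i : Fin (n + 2))
    (hi : (i : ℕ) < 2) : ∑ j, (e2 B i j : ℕ) = 2 := by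
  rw [sum_succ2]
  have h0 : e2 B i 0 = 1 := by
    simp only [e2]; rw [dif_pos hi, if_pos (by simp)]
  have h1 : e2 B i 1 = 1 := by
    simp only [e2]; rw [dif_pos hi, if_pos (by rw [val_one']; omega)]
  have ht : ∑ j : Fin n, ((e2 B i j.succ.succ : ℕ)) = 0 := by
    apply Finset.sum_eq_zero
    intro j _
    simp only [e2]; rw [dif_pos hi, if_neg (by simp [Fin.val_succ])]
    rfl
  rw [h0, h1, ht]
  rfl

lemma e2_rowSum_big {n : ℕ} (B : Fin n → Fin n → Fin 2) (i : Fin (n + 2))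
    (hi : 2 ≤ (i : ℕ)) :
    ∑ j, (e2 B i j : ℕ) = ∑ j, ((B ⟨(i : ℕ) - 2, by have := i.isLt; omega⟩ j : ℕ)) := by
  rw [sum_succ2]
  have h0 : e2 B i 0 = 0 := by
    simp only [e2]; rw [dif_neg (by omega), dif_pos (by simp)]
  have h1 : e2 B i 1 = 0 := by
    simp only [e2]; rw [dif_neg (by omega), dif_pos (by rw [val_one']; omega)]
  rw [h0, h1]
  simp only [Fin.val_zero, Nat.zero_add]
  apply Finset.sum_congr rfl
  intro j _
  rw [e2_entry_tail B i hi j]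

lemma e2_rows_antitone {n : ℕ} (B : Fin n → Fin n → Fin 2)
    (hB : Antitone (rowVal B)) : Antitone (rowVal (e2 B)) := by
  intro a b hab
  by_cases hb : (b : ℕ) < 2
  · have ha : (a : ℕ) < 2 := by have := hab; rw [Fin.le_def] at this; omega
    rw [e2_rowVal_small B a ha, e2_rowVal_small B b hb]
  · push_neg at hb
    rw [e2_rowVal_big B b hb]
    by_cases ha : (a : ℕ) < 2
    · rw [e2_rowVal_small B a ha]
      have := rv_lt (B ⟨(b : ℕ) - 2, by have := b.isLt; omega⟩)
      rw [← rowVal_eq_rv] at this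
      omega
    · push_neg at ha
      rw [e2_rowVal_big B a ha]
      apply hB
      rw [Fin.le_def] at hab ⊢
      simp only
      omega

lemma e2_rows_sum {n : ℕ} (B : Fin n → Fin n → Fin 2)
    (hB : ∀ i, ∑ j, (B i j : ℕ) = 2) : ∀ i, ∑ j, (e2 B i j : ℕ) = 2 := by
  intro i
  by_cases hi : (i : ℕ) < 2
  · exact e2_rowSum_small B i hi
  · push_neg at hi
    rw [e2_rowSum_big B i hi]
    exact hB _

lemma e2_mem {n : ℕ} (B : Fin n → Fin n → Fin 2) (hB : B ∈ DeltaSet n 2) :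
    e2 B ∈ DeltaSet (n + 2) 2 := by
  obtain ⟨⟨hr, hc⟩, hΛr, hΛc⟩ := hB
  refine ⟨⟨e2_rows_antitone B hr, ?_⟩, e2_rows_sum B hΛr, ?_⟩
  · rw [← rowVal_tr, tr_e2]
    exact e2_rows_antitone (tr B) (by rw [rowVal_tr]; exact hc)
  · intro j
    have : ∀ i, e2 B i j = e2 (tr B) j i := by
      intro i
      rw [← tr_e2]; rfl
    simp only [this]
    exact e2_rows_sum (tr B) (fun i => hΛc i) j

lemma row1_struct {n : ℕ} (A : Fin (n + 2) → Fin (n + 2) → Fin 2)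
    (hA : A ∈ DeltaSet (n + 2) 2) (h11 : A 1 1 = 1) :
    ∀ j : Fin (n + 2), 2 ≤ (j : ℕ) → A 1 j = 0 := by
  have h10 : A 1 0 = 1 := (col0_struct A hA).1
  obtain ⟨b, hb0, hb1, hbz⟩ := sum_two_ones (A 1) (hA.2.1 1) 0 h10
  have hb : b = 1 := by
    by_contra hbne
    have := hbz 1 (by intro hh; exact absurd (congrArg Fin.val hh) (by simp))
      (fun hh => hbne hh.symm)
    rw [h11] at this
    exact absurd (congrArg Fin.val this) (by simp)
  subst hb
  intro j hj
  apply hbz j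
  · intro hh; rw [hh] at hj; simp at hj
  · intro hh; rw [hh, Fin.val_one] at hj; omega

lemma col1_struct {n : ℕ} (A : Fin (n + 2) → Fin (n + 2) → Fin 2)
    (hA : A ∈ DeltaSet (n + 2) 2) (h11 : A 1 1 = 1) :
    ∀ i : Fin (n + 2), 2 ≤ (i : ℕ) → A i 1 = 0 :=
  row1_struct (tr A) (tr_mem_Delta A hA) h11

lemma res2_entry {n : ℕ} (A : Fin (n + 2) → Fin (n + 2) → Fin 2) (i : Fin n) (j : Fin n) :
    res2 A i j = A ⟨(i : ℕ) + 2, by have := i.isLt; omega⟩ (Fin.succ (Fin.succ j)) := by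
  simp only [res2]
  exact congrArg _ (Fin.ext (by simp [Fin.val_succ]))

lemma res2_rowVal {n : ℕ} (A : Fin (n + 2) → Fin (n + 2) → Fin 2) (i : Fin n)
    (h0 : A ⟨(i : ℕ) + 2, by have := i.isLt; omega⟩ 0 = 0)
    (h1 : A ⟨(i : ℕ) + 2, by have := i.isLt; omega⟩ 1 = 0) :
    rowVal (res2 A) i = rowVal A ⟨(i : ℕ) + 2, by have := i.isLt; omega⟩ := by
  rw [rowVal_eq_rv (A := A), rv_succ2, h0, h1]
  simp only [Fin.val_zero, Nat.zero_mul, Nat.zero_add]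
  rw [rowVal_eq_rv]
  congr 1

lemma sum_tail {n : ℕ} (r : Fin (n + 2) → Fin 2) (h0 : r 0 = 0) (h1 : r 1 = 0)
    (hs : ∑ j, (r j : ℕ) = 2) : ∑ j : Fin n, (r j.succ.succ : ℕ) = 2 := by
  have h2 := sum_succ2 r
  rw [h0, h1] at h2
  simp only [Fin.val_zero, Nat.zero_add] at h2
  omega

lemma res2_rowSum {n : ℕ} (A : Fin (n + 2) → Fin (n + 2) → Fin 2) (i : Fin n)
    (h0 : A ⟨(i : ℕ) + 2, by have := i.isLt; omega⟩ 0 = 0)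
    (h1 : A ⟨(i : ℕ) + 2, by have := i.isLt; omega⟩ 1 = 0)
    (hs : ∑ j, ((A ⟨(i : ℕ) + 2, by have := i.isLt; omega⟩ j : ℕ)) = 2) :
    ∑ j, (res2 A i j : ℕ) = 2 := by
  have key : ∑ j, (res2 A i j : ℕ)
      = ∑ j : Fin n, ((A ⟨(i : ℕ) + 2, by have := i.isLt; omega⟩ j.succ.succ : ℕ)) := rfl
  rw [key]
  exact sum_tail _ h0 h1 hs

lemma res2_rows {n : ℕ} (A : Fin (n + 2) → Fin (n + 2) → Fin 2)
    (hA : A ∈ DeltaSet (n + 2) 2) (h11 : A 1 1 = 1) :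
    Antitone (rowVal (res2 A)) ∧ ∀ i, ∑ j, (res2 A i j : ℕ) = 2 := by
  have hcol0z := (col0_struct A hA).2
  have hcol1z := col1_struct A hA h11
  constructor
  · intro a b hab
    rw [res2_rowVal A a (hcol0z _ (by simp)) (hcol1z _ (by simp)),
      res2_rowVal A b (hcol0z _ (by simp)) (hcol1z _ (by simp))]
    apply hA.1.1
    rw [Fin.le_def] at hab ⊢
    simp only
    omega
  · intro i
    exact res2_rowSum A i (hcol0z _ (by simp)) (hcol1z _ (by simp)) (hA.2.1 _)

lemma tr_res2 {n : ℕ} (A : Fin (n + 2) → Fin (n + 2) → Fin 2) :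
    res2 (tr A) = tr (res2 A) := rfl

lemma caseA_mem {n : ℕ} (A : Fin (n + 2) → Fin (n + 2) → Fin 2)
    (hA : A ∈ DeltaSet (n + 2) 2) (h11 : A 1 1 = 1) : res2 A ∈ DeltaSet n 2 := by
  have hrows := res2_rows A hA h11
  have hcols := res2_rows (tr A) (tr_mem_Delta A hA) h11
  rw [tr_res2] at hcols
  refine ⟨⟨hrows.1, ?_⟩, hrows.2, ?_⟩
  · rw [← rowVal_tr]
    exact hcols.1
  · intro j
    exact hcols.2 j

lemma caseA_eq {n : ℕ} (A : Fin (n + 2) → Fin (n + 2) → Fin 2)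
    (hA : A ∈ DeltaSet (n + 2) 2) (h11 : A 1 1 = 1) : e2 (res2 A) = A := by
  have h00 : A 0 0 = 1 := entry00 A hA
  have h01 := (row0_struct A hA).1
  have hrow0z := (row0_struct A hA).2
  have h10 := (col0_struct A hA).1
  have hcol0z := (col0_struct A hA).2
  have hrow1z := row1_struct A hA h11
  have hcol1z := col1_struct A hA h11
  funext i j
  simp only [e2]
  split_ifs with hi hj hj
  · -- i < 2, j < 2
    have hi' : i = 0 ∨ i = 1 := by
      rcases (by omega : (i : ℕ) = 0 ∨ (i : ℕ) = 1) with h | h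
      · exact Or.inl (fin_eq_of_val (by simpa using h))
      · exact Or.inr (fin_eq_of_val (by rw [val_one']; exact h))
    have hj' : j = 0 ∨ j = 1 := by
      rcases (by omega : (j : ℕ) = 0 ∨ (j : ℕ) = 1) with h | h
      · exact Or.inl (fin_eq_of_val (by simpa using h))
      · exact Or.inr (fin_eq_of_val (by rw [val_one']; exact h))
    rcases hi' with rfl | rfl <;> rcases hj' with rfl | rfl
    · exact h00.symm
    · exact h01.symm
    · exact h10.symm
    · exact h11.symm
  · -- i < 2, j ≥ 2
    push_neg at hj
    have hi' : i = 0 ∨ i = 1 := by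
      rcases (by omega : (i : ℕ) = 0 ∨ (i : ℕ) = 1) with h | h
      · exact Or.inl (fin_eq_of_val (by simpa using h))
      · exact Or.inr (fin_eq_of_val (by rw [val_one']; exact h))
    rcases hi' with rfl | rfl
    · exact (hrow0z j hj).symm
    · exact (hrow1z j hj).symm
  · -- i ≥ 2, j < 2
    push_neg at hi
    have hj' : j = 0 ∨ j = 1 := by
      rcases (by omega : (j : ℕ) = 0 ∨ (j : ℕ) = 1) with h | h
      · exact Or.inl (fin_eq_of_val (by simpa using h))
      · exact Or.inr (fin_eq_of_val (by rw [val_one']; exact h))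
    rcases hj' with rfl | rfl
    · exact (hcol0z i hi).symm
    · exact (hcol1z i hi).symm
  · -- i ≥ 2, j ≥ 2
    push_neg at hi hj
    simp only [res2]
    congr 1 <;> exact Fin.ext (by simp; omega)

lemma rv_head {n : ℕ} (r : Fin (n + 1) → Fin 2) (h : r 0 = 1) :
    rv (n + 1) r = 2 ^ n + rv n (fun j => r j.succ) := by
  rw [rv_succ, h]
  simp only [Fin.val_one, Nat.one_mul]
  rfl

lemma e1_entry_00 {n : ℕ} (B : Fin (n + 1) → Fin (n + 1) → Fin 2) (I : Fin (n + 2))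
    (hI : (I : ℕ) = 0) : e1 B I 0 = 1 := by
  simp only [e1]; rw [dif_pos hI, if_pos (by simp)]

lemma e1_entry_01 {n : ℕ} (B : Fin (n + 1) → Fin (n + 1) → Fin 2) (I : Fin (n + 2))
    (hI : (I : ℕ) = 0) : e1 B I 1 = 1 := by
  simp only [e1]; rw [dif_pos hI, if_pos (by rw [val_one'])]

lemma e1_entry_0tail {n : ℕ} (B : Fin (n + 1) → Fin (n + 1) → Fin 2) (I : Fin (n + 2))
    (hI : (I : ℕ) = 0) (j : Fin n) : e1 B I j.succ.succ = 0 := by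
  simp only [e1]; rw [dif_pos hI, if_neg (by simp [Fin.val_succ])]

lemma e1_entry_10 {n : ℕ} (B : Fin (n + 1) → Fin (n + 1) → Fin 2) (I : Fin (n + 2))
    (hI : (I : ℕ) = 1) : e1 B I 0 = 1 := by
  simp only [e1]; rw [dif_neg (by omega), dif_pos (by simp), if_pos (by omega)]

lemma e1_entry_11 {n : ℕ} (B : Fin (n + 1) → Fin (n + 1) → Fin 2) (I : Fin (n + 2))
    (hI : (I : ℕ) = 1) : e1 B I 1 = 0 := by
  simp only [e1]; rw [dif_neg (by omega), dif_neg (by rw [val_one']; omega),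
    if_pos ⟨hI, val_one'⟩]

lemma e1_entry_1tail {n : ℕ} (B : Fin (n + 1) → Fin (n + 1) → Fin 2) (I : Fin (n + 2))
    (hI : (I : ℕ) = 1) (j : Fin n) : e1 B I j.succ.succ = B 0 j.succ := by
  simp only [e1]
  rw [dif_neg (by omega), dif_neg (by simp [Fin.val_succ]), if_neg (by simp [Fin.val_succ])]
  congr 1 <;> exact Fin.ext (by simp [Fin.val_succ]; omega)

lemma e1_entry_big0 {n : ℕ} (B : Fin (n + 1) → Fin (n + 1) → Fin 2) (I : Fin (n + 2))
    (hI : 2 ≤ (I : ℕ)) : e1 B I 0 = 0 := by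
  simp only [e1]; rw [dif_neg (by omega), dif_pos (by simp), if_neg (by omega)]

lemma e1_entry_bigtail {n : ℕ} (B : Fin (n + 1) → Fin (n + 1) → Fin 2) (I : Fin (n + 2))
    (hI : 2 ≤ (I : ℕ)) (j : Fin (n + 1)) :
    e1 B I j.succ = B ⟨(I : ℕ) - 1, by have := I.isLt; omega⟩ j := by
  simp only [e1]
  rw [dif_neg (by omega), dif_neg (by simp [Fin.val_succ]), if_neg (by omega)]
  exact congrArg (fun z => B z _) (Fin.ext (by simp [Fin.val_succ]))

lemma e1_rowVal_0 {n : ℕ} (B : Fin (n + 1) → Fin (n + 1) → Fin 2) (I : Fin (n + 2))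
    (hI : (I : ℕ) = 0) : rowVal (e1 B) I = 2 ^ (n + 1) + 2 ^ n := by
  rw [rowVal_eq_rv, rv_succ2, e1_entry_00 B I hI, e1_entry_01 B I hI,
    rv_zero _ (fun j => e1_entry_0tail B I hI j)]
  simp

lemma e1_rowVal_1 {n : ℕ} (B : Fin (n + 1) → Fin (n + 1) → Fin 2) (I : Fin (n + 2))
    (hI : (I : ℕ) = 1) :
    rowVal (e1 B) I = 2 ^ (n + 1) + rv n (fun j => B 0 j.succ) := by
  rw [rowVal_eq_rv, rv_succ2, e1_entry_10 B I hI, e1_entry_11 B I hI]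
  have : rv n (fun j => e1 B I j.succ.succ) = rv n (fun j => B 0 j.succ) := by
    congr 1
    funext j
    rw [e1_entry_1tail B I hI j]
  rw [this]
  simp

lemma e1_rowVal_big {n : ℕ} (B : Fin (n + 1) → Fin (n + 1) → Fin 2) (I : Fin (n + 2))
    (hI : 2 ≤ (I : ℕ)) :
    rowVal (e1 B) I = rowVal B ⟨(I : ℕ) - 1, by have := I.isLt; omega⟩ := by
  rw [rowVal_eq_rv, rv_succ, e1_entry_big0 B I hI]
  have : rv (n + 1) ((e1 B I) ∘ Fin.succ) = rv (n + 1) (B ⟨(I : ℕ) - 1, by have := I.isLt; omega⟩) := by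
    congr 1
    funext j
    exact e1_entry_bigtail B I hI j
  rw [this]
  simp only [Fin.val_zero, Nat.zero_mul, Nat.zero_add]
  rfl

lemma e1_rowSum {n : ℕ} (B : Fin (n + 1) → Fin (n + 1) → Fin 2)
    (hB : B ∈ DeltaSet (n + 1) 2) (I : Fin (n + 2)) : ∑ j, (e1 B I j : ℕ) = 2 := by
  have h00 : B 0 0 = 1 := entry00 B hB
  rcases (by omega : (I : ℕ) = 0 ∨ (I : ℕ) = 1 ∨ 2 ≤ (I : ℕ)) with hI | hI | hI
  · rw [sum_succ2, e1_entry_00 B I hI, e1_entry_01 B I hI]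
    have : ∑ j : Fin n, ((e1 B I j.succ.succ : ℕ)) = 0 :=
      Finset.sum_eq_zero (fun j _ => by rw [e1_entry_0tail B I hI j]; rfl)
    rw [this]
    rfl
  · rw [sum_succ2, e1_entry_10 B I hI, e1_entry_11 B I hI]
    have ht : ∑ j : Fin n, ((e1 B I j.succ.succ : ℕ)) = ∑ j : Fin n, ((B 0 j.succ : ℕ)) :=
      Finset.sum_congr rfl (fun j _ => by rw [e1_entry_1tail B I hI j])
    have hs := hB.2.1 0
    rw [Fin.sum_univ_succ, h00] at hs
    rw [ht]
    simp only [Fin.val_one, Fin.val_zero, Fin.isValue] at hs ⊢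
    omega
  · rw [Fin.sum_univ_succ, e1_entry_big0 B I hI]
    have ht : ∑ j : Fin (n + 1), ((e1 B I j.succ : ℕ))
        = ∑ j : Fin (n + 1), ((B ⟨(I : ℕ) - 1, by have := I.isLt; omega⟩ j : ℕ)) :=
      Finset.sum_congr rfl (fun j _ => by rw [e1_entry_bigtail B I hI j])
    rw [ht]
    have := hB.2.1 ⟨(I : ℕ) - 1, by have := I.isLt; omega⟩
    simp only [Fin.val_zero] at this ⊢
    omega

lemma e1_rows_antitone {n : ℕ} (B : Fin (n + 1) → Fin (n + 1) → Fin 2)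
    (hB : B ∈ DeltaSet (n + 1) 2) : Antitone (rowVal (e1 B)) := by
  have h00 : B 0 0 = 1 := entry00 B hB
  have hval0 : rowVal B 0 = 2 ^ n + rv n (fun j => B 0 j.succ) := by
    rw [rowVal_eq_rv, rv_head _ h00]
  have hs : rv n (fun j => B 0 j.succ) < 2 ^ n := rv_lt _
  intro a b hab
  rw [Fin.le_def] at hab
  rcases (by omega : (a : ℕ) = 0 ∨ (a : ℕ) = 1 ∨ 2 ≤ (a : ℕ)) with ha | ha | ha
  · rw [e1_rowVal_0 B a ha]
    rcases (by omega : (b : ℕ) = 0 ∨ (b : ℕ) = 1 ∨ 2 ≤ (b : ℕ)) with hb | hb | hb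
    · rw [e1_rowVal_0 B b hb]
    · rw [e1_rowVal_1 B b hb]; omega
    · rw [e1_rowVal_big B b hb]
      have := rv_lt (B ⟨(b : ℕ) - 1, by have := b.isLt; omega⟩)
      rw [← rowVal_eq_rv] at this
      have h2 : (2 : ℕ) ^ (n + 1) = 2 ^ n + 2 ^ n := by ring
      omega
  · rcases (by omega : (b : ℕ) = 1 ∨ 2 ≤ (b : ℕ)) with hb | hb
    · rw [e1_rowVal_1 B a ha, e1_rowVal_1 B b hb]
    · rw [e1_rowVal_1 B a ha, e1_rowVal_big B b hb]
      have hmono := hB.1.1 (Fin.zero_le ⟨(b : ℕ) - 1, by have := b.isLt; omega⟩)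
      rw [hval0] at hmono
      omega
  · have hb : 2 ≤ (b : ℕ) := by omega
    rw [e1_rowVal_big B a ha, e1_rowVal_big B b hb]
    apply hB.1.1
    rw [Fin.le_def]
    simp only
    omega

lemma e1_mem {n : ℕ} (B : Fin (n + 1) → Fin (n + 1) → Fin 2)
    (hB : B ∈ DeltaSet (n + 1) 2) : e1 B ∈ DeltaSet (n + 2) 2 := by
  refine ⟨⟨e1_rows_antitone B hB, ?_⟩, e1_rowSum B hB, ?_⟩
  · rw [← rowVal_tr, tr_e1]
    exact e1_rows_antitone (tr B) (tr_mem_Delta B hB)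
  · intro j
    have : ∀ i, e1 B i j = e1 (tr B) j i := by
      intro i
      rw [← tr_e1]; rfl
    simp only [this]
    exact e1_rowSum (tr B) (tr_mem_Delta B hB) j

lemma row1_structB {n : ℕ} (A : Fin (n + 2) → Fin (n + 2) → Fin 2)
    (hA : A ∈ DeltaSet (n + 2) 2) (h11 : A 1 1 = 0) :
    ∃ q : Fin (n + 2), 2 ≤ (q : ℕ) ∧ A 1 q = 1 ∧ ∀ j, j ≠ 0 → j ≠ q → A 1 j = 0 := by
  have h10 : A 1 0 = 1 := (col0_struct A hA).1
  obtain ⟨b, hb0, hb1, hbz⟩ := sum_two_ones (A 1) (hA.2.1 1) 0 h10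
  refine ⟨b, ?_, hb1, hbz⟩
  have h5 : (b : ℕ) ≠ 0 := fun hh => hb0 (fin_eq_of_val (by simpa using hh))
  have h6 : (b : ℕ) ≠ 1 := by
    intro hh
    have : b = 1 := fin_eq_of_val (by rw [val_one']; exact hh)
    rw [this, h11] at hb1
    exact absurd (congrArg Fin.val hb1) (by simp)
  omega

lemma res1_00 {n : ℕ} (A : Fin (n + 2) → Fin (n + 2) → Fin 2) : res1 A 0 0 = 1 := by
  simp [res1]

lemma res1_0tail {n : ℕ} (A : Fin (n + 2) → Fin (n + 2) → Fin 2) (j : Fin n) :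
    res1 A 0 j.succ = A 1 j.succ.succ := by
  simp only [res1]
  rw [if_neg (by simp [Fin.succ_ne_zero])]
  rw [Fin.succ_zero_eq_one]

lemma res1_big {n : ℕ} (A : Fin (n + 2) → Fin (n + 2) → Fin 2) (I : Fin (n + 1))
    (hI : 1 ≤ (I : ℕ)) (j : Fin (n + 1)) : res1 A I j = A I.succ j.succ := by
  simp only [res1]
  rw [if_neg (by intro hh; rw [hh.1] at hI; simp at hI)]

lemma res1_rowVal_0 {n : ℕ} (A : Fin (n + 2) → Fin (n + 2) → Fin 2) :
    rowVal (res1 A) 0 = 2 ^ n + rv n (fun j => A 1 j.succ.succ) := by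
  rw [rowVal_eq_rv, rv_head _ (res1_00 A)]
  congr 1

lemma rowVal_A1 {n : ℕ} (A : Fin (n + 2) → Fin (n + 2) → Fin 2)
    (h10 : A 1 0 = 1) (h11 : A 1 1 = 0) :
    rowVal A 1 = 2 ^ (n + 1) + rv n (fun j => A 1 j.succ.succ) := by
  rw [rowVal_eq_rv, rv_succ2, h10, h11]
  simp

lemma res1_rowVal_big {n : ℕ} (A : Fin (n + 2) → Fin (n + 2) → Fin 2) (I : Fin (n + 1))
    (hI : 1 ≤ (I : ℕ)) (h0 : A I.succ 0 = 0) :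
    rowVal (res1 A) I = rowVal A I.succ := by
  rw [rowVal_eq_rv (A := A), rv_succ, h0]
  simp only [Fin.val_zero, Nat.zero_mul, Nat.zero_add]
  rw [rowVal_eq_rv]
  have : res1 A I = (A I.succ) ∘ Fin.succ := by
    funext j
    exact res1_big A I hI j
  rw [this]

/-- the key comparison: in case `A 1 1 = 0`, row 2 of `A` is at most the patched row. -/
lemma caseB_key {n : ℕ} (A : Fin (n + 2) → Fin (n + 2) → Fin 2)
    (hA : A ∈ DeltaSet (n + 2) 2) (h11 : A 1 1 = 0) (I2 : Fin (n + 2)) (hI2 : (I2 : ℕ) = 2) :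
    rowVal A I2 ≤ 2 ^ n + rv n (fun j => A 1 j.succ.succ) := by
  have hrow0z := (row0_struct A hA).2
  have hcol0z := (col0_struct A hA).2
  have hI20 : A I2 0 = 0 := hcol0z I2 (by omega)
  rcases fin2_cases (A I2 1) with h21 | h21
  · -- second row also 0 at column 1: small value
    have : rowVal A I2 < 2 ^ n := by
      rw [rowVal_eq_rv, rv_succ2, hI20, h21]
      simp only [Fin.val_zero, Nat.zero_mul, Nat.zero_add]
      exact rv_lt _
    omega
  · obtain ⟨b, hb1, hbq, hbz⟩ := sum_two_ones (A I2) (hA.2.1 I2) 1 h21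
    have hb0 : (b : ℕ) ≠ 0 := by
      intro hh
      have : b = 0 := fin_eq_of_val (by simpa using hh)
      rw [this] at hbq
      rw [hI20] at hbq
      exact absurd (congrArg Fin.val hbq) (by simp)
    have hbv : 2 ≤ (b : ℕ) := by
      have : (b : ℕ) ≠ 1 := fun hh => hb1 (fin_eq_of_val (by rw [val_one']; exact hh))
      omega
    obtain ⟨q, hq2, hq1, hqz⟩ := row1_structB A hA h11
    -- q ≤ b
    have hqb : (q : ℕ) ≤ (b : ℕ) := by
      by_contra hcon
      push_neg at hcon
      have hcolq : 2 ^ n ≤ colVal A q := by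
        rw [colVal_eq_rv]
        have := rv_ge (m := n + 2) (fun i => A i q) 1 hq1
        rw [val_one'] at this
        simpa using this
      have hcolb : colVal A b < 2 ^ n := by
        rw [colVal_eq_rv]
        have := rv_lt_of_zero (m := n + 2) (fun i => A i b) 2 ?_
        · simpa using this
        · intro j hj
          rcases (by omega : (j : ℕ) = 0 ∨ (j : ℕ) = 1) with h | h
          · rw [fin_eq_of_val (a := j) (b := 0) (by simpa using h)]
            exact hrow0z b hbv
          · rw [fin_eq_of_val (a := j) (b := 1) (by rw [val_one']; exact h)]
            exact hqz b (fun hh => hb0 (by rw [hh]; simp))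
              (fun hh => by rw [hh] at hcon; omega)
      have := hA.1.2 (show b ≤ q from by rw [Fin.le_def]; omega)
      omega
    -- rowVal A I2 = 2^n + 2^(n+1-b)
    have hval : rowVal A I2 = 2 ^ n + 2 ^ (n + 1 - (b : ℕ)) := by
      have eA : n + 2 - 1 - ((1 : Fin (n + 2)) : ℕ) = n := by rw [val_one']; omega
      have eB : n + 2 - 1 - (b : ℕ) = n + 1 - (b : ℕ) := by omega
      rw [rowVal_eq_rv, rv_eq_pair (A I2) 1 b
        (fun hh => hb1 hh.symm) h21 hbq (fun j hj1 hjb => hbz j hj1 hjb), eA, eB]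
    have ht : 2 ^ (n + 1 - (q : ℕ)) ≤ rv n (fun j => A 1 j.succ.succ) := by
      have hqlt := q.isLt
      have hj0 : ((⟨(q : ℕ) - 2, by omega⟩ : Fin n).succ.succ) = q := by
        apply Fin.ext
        simp [Fin.val_succ]
        omega
      have := rv_ge (fun j => A 1 j.succ.succ) ⟨(q : ℕ) - 2, by omega⟩
        (by show A 1 ((⟨(q : ℕ) - 2, by omega⟩ : Fin n).succ.succ) = 1; rw [hj0]; exact hq1)
      have hexp : n - 1 - ((q : ℕ) - 2) = n + 1 - (q : ℕ) := by omega
      rwa [hexp] at this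
    have hpow : 2 ^ (n + 1 - (b : ℕ)) ≤ 2 ^ (n + 1 - (q : ℕ)) :=
      Nat.pow_le_pow_right (by norm_num) (by omega)
    omega

lemma res1_rowSum_0 {n : ℕ} (A : Fin (n + 2) → Fin (n + 2) → Fin 2)
    (h10 : A 1 0 = 1) (h11 : A 1 1 = 0) (hs : ∑ j, (A 1 j : ℕ) = 2) :
    ∑ j, (res1 A 0 j : ℕ) = 2 := by
  rw [Fin.sum_univ_succ]
  have h1 : ∑ j : Fin n, ((res1 A 0 j.succ : ℕ)) = ∑ j : Fin n, ((A 1 j.succ.succ : ℕ)) :=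
    Finset.sum_congr rfl (fun j _ => by rw [res1_0tail A j])
  rw [h1, res1_00 A]
  rw [sum_succ2, h10, h11] at hs
  simp only [Fin.val_one, Fin.val_zero] at hs ⊢
  omega

lemma res1_rowSum_big {n : ℕ} (A : Fin (n + 2) → Fin (n + 2) → Fin 2) (I : Fin (n + 1))
    (hI : 1 ≤ (I : ℕ)) (h0 : A I.succ 0 = 0) (hs : ∑ j, (A I.succ j : ℕ) = 2) :
    ∑ j, (res1 A I j : ℕ) = 2 := by
  have h1 : ∑ j, ((res1 A I j : ℕ)) = ∑ j : Fin (n + 1), ((A I.succ j.succ : ℕ)) :=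
    Finset.sum_congr rfl (fun j _ => by rw [res1_big A I hI j])
  rw [Fin.sum_univ_succ, h0] at hs
  simp only [Fin.val_zero] at hs
  rw [h1]
  omega

lemma caseB_rows {n : ℕ} (A : Fin (n + 2) → Fin (n + 2) → Fin 2)
    (hA : A ∈ DeltaSet (n + 2) 2) (h11 : A 1 1 = 0) :
    Antitone (rowVal (res1 A)) ∧ ∀ i, ∑ j, (res1 A i j : ℕ) = 2 := by
  have h10 : A 1 0 = 1 := (col0_struct A hA).1
  have hcol0z := (col0_struct A hA).2
  constructor
  · rw [Fin.antitone_iff_succ_le]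
    intro i
    have hisucc : rowVal (res1 A) i.succ = rowVal A i.succ.succ := by
      apply res1_rowVal_big A i.succ (by simp [Fin.val_succ])
      exact hcol0z _ (by simp [Fin.val_succ])
    rcases (by omega : (i : ℕ) = 0 ∨ 1 ≤ (i : ℕ)) with hi | hi
    · have hcast : i.castSucc = 0 := fin_eq_of_val (by simpa using hi)
      rw [hisucc, hcast, res1_rowVal_0 A]
      exact caseB_key A hA h11 i.succ.succ (by simp [Fin.val_succ]; omega)
    · have hcastval : 1 ≤ (i.castSucc : ℕ) := by simpa using hi
      rw [hisucc, res1_rowVal_big A i.castSucc hcastval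
        (hcol0z _ (by simp [Fin.val_succ]; omega))]
      apply hA.1.1
      rw [Fin.le_def]
      simp [Fin.val_succ]
    
  · intro i
    rcases (by omega : (i : ℕ) = 0 ∨ 1 ≤ (i : ℕ)) with hi | hi
    · rw [fin_eq_of_val (a := i) (b := 0) (by simpa using hi)]
      exact res1_rowSum_0 A h10 h11 (hA.2.1 1)
    · exact res1_rowSum_big A i hi (hcol0z _ (by simp [Fin.val_succ]; omega)) (hA.2.1 _)

lemma tr_res1 {n : ℕ} (A : Fin (n + 2) → Fin (n + 2) → Fin 2) :
    res1 (tr A) = tr (res1 A) := by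
  funext i j
  simp only [res1, tr]
  split_ifs <;> first | rfl | tauto

lemma caseB_mem {n : ℕ} (A : Fin (n + 2) → Fin (n + 2) → Fin 2)
    (hA : A ∈ DeltaSet (n + 2) 2) (h11 : A 1 1 = 0) : res1 A ∈ DeltaSet (n + 1) 2 := by
  have hrows := caseB_rows A hA h11
  have hcols := caseB_rows (tr A) (tr_mem_Delta A hA) h11
  rw [tr_res1] at hcols
  refine ⟨⟨hrows.1, ?_⟩, hrows.2, ?_⟩
  · rw [← rowVal_tr]
    exact hcols.1
  · intro j
    exact hcols.2 j

lemma caseB_eq {n : ℕ} (A : Fin (n + 2) → Fin (n + 2) → Fin 2)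
    (hA : A ∈ DeltaSet (n + 2) 2) (h11 : A 1 1 = 0) : e1 (res1 A) = A := by
  have h00 : A 0 0 = 1 := entry00 A hA
  have h01 := (row0_struct A hA).1
  have hrow0z := (row0_struct A hA).2
  have h10 := (col0_struct A hA).1
  have hcol0z := (col0_struct A hA).2
  funext i j
  simp only [e1]
  split_ifs with hi hj hj0 hi1 hij
  · -- i = 0, j ≤ 1
    have hi' : i = 0 := fin_eq_of_val (by simpa using hi)
    rcases (by omega : (j : ℕ) = 0 ∨ (j : ℕ) = 1) with h | h
    · rw [hi', fin_eq_of_val (a := j) (b := 0) (by simpa using h)]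
      exact h00.symm
    · rw [hi', fin_eq_of_val (a := j) (b := 1) (by rw [val_one']; exact h)]
      exact h01.symm
  · -- i = 0, j ≥ 2
    push_neg at hj
    rw [fin_eq_of_val (a := i) (b := 0) (by simpa using hi)]
    exact (hrow0z j (by omega)).symm
  · -- i ≥ 1, j = 0, i ≤ 1
    rw [fin_eq_of_val (a := j) (b := 0) (by simpa using hj0),
      fin_eq_of_val (a := i) (b := 1) (by rw [val_one']; omega)]
    exact h10.symm
  · -- i ≥ 2, j = 0
    rw [fin_eq_of_val (a := j) (b := 0) (by simpa using hj0)]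
    exact (hcol0z i (by omega)).symm
  · -- i = 1, j = 1
    rw [fin_eq_of_val (a := i) (b := 1) (by rw [val_one']; exact hij.1),
      fin_eq_of_val (a := j) (b := 1) (by rw [val_one']; exact hij.2)]
    exact h11.symm
  · -- general case
    simp only [res1]
    rw [if_neg ?_]
    · have e1' : (⟨(i : ℕ) - 1, by have := i.isLt; omega⟩ : Fin (n + 1)).succ = i :=
        Fin.ext (by simp [Fin.val_succ]; omega)
      have e2' : (⟨(j : ℕ) - 1, by have := j.isLt; omega⟩ : Fin (n + 1)).succ = j :=
        Fin.ext (by simp [Fin.val_succ]; omega)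
      rw [e1', e2']
    · intro ⟨hh1, hh2⟩
      apply hij
      have v1 := congrArg Fin.val hh1
      have v2 := congrArg Fin.val hh2
      simp at v1 v2
      omega

lemma e1_at_11 {n : ℕ} (B : Fin (n + 1) → Fin (n + 1) → Fin 2) : e1 B 1 1 = 0 :=
  e1_entry_11 B 1 val_one'

lemma e2_at_11 {n : ℕ} (B : Fin n → Fin n → Fin 2) : e2 B 1 1 = 1 := by
  simp only [e2]
  rw [dif_pos (by rw [val_one']; omega), if_pos (by rw [val_one']; omega)]

lemma decomp (n : ℕ) :
    DeltaSet (n + 2) 2 = e1 '' DeltaSet (n + 1) 2 ∪ e2 '' DeltaSet n 2 := by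
  ext A
  constructor
  · intro hA
    rcases fin2_cases (A 1 1) with h | h
    · exact Or.inl ⟨res1 A, caseB_mem A hA h, caseB_eq A hA h⟩
    · exact Or.inr ⟨res2 A, caseA_mem A hA h, caseA_eq A hA h⟩
  · rintro (⟨B, hB, rfl⟩ | ⟨B, hB, rfl⟩)
    · exact e1_mem B hB
    · exact e2_mem B hB

lemma delta_rec (n : ℕ) : deltaCard (n + 2) 2 = deltaCard (n + 1) 2 + deltaCard n 2 := by
  rw [deltaCard, decomp n]
  rw [Set.ncard_union_eq ?_ (Set.toFinite _) (Set.toFinite _)]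
  · rw [Set.ncard_image_of_injOn (fun B hB B' hB' h => by
      rw [← res1_e1 B hB, ← res1_e1 B' hB', h]),
      Set.ncard_image_of_injOn (fun B _ B' _ h => by
      rw [← res2_e2 B, ← res2_e2 B', h])]
    rfl
  · rw [Set.disjoint_left]
    rintro x ⟨B, _, rfl⟩ ⟨C, _, hC⟩
    have h1 : e1 B 1 1 = 0 := e1_at_11 B
    have h2 : e1 B 1 1 = 1 := by rw [← hC]; exact e2_at_11 C
    rw [h1] at h2
    exact absurd (congrArg Fin.val h2) (by simp)

lemma delta0 : deltaCard 0 2 = 1 := by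
  have h : DeltaSet 0 2 = {fun i _ => i.elim0} := by
    apply Set.eq_of_subset_of_subset
    · intro A _
      simp only [Set.mem_singleton_iff]
      funext i
      exact i.elim0
    · intro A hA
      exact ⟨⟨fun a _ _ => a.elim0, fun a _ _ => a.elim0⟩, fun i => i.elim0, fun j => j.elim0⟩
  rw [deltaCard, h, Set.ncard_singleton]

lemma delta1 : deltaCard 1 2 = 0 := by
  have h : DeltaSet 1 2 = ∅ := by
    rw [Set.eq_empty_iff_forall_notMem]
    intro A hA
    have hs := hA.2.1 0
    rw [Fin.sum_univ_one] at hs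
    have := Fin.is_le (A 0 0)
    omega
  rw [deltaCard, h, Set.ncard_empty]

theorem fib_eq_delta (n : ℕ) : fibP n = deltaCard (n + 2) 2 := by
  induction n using fibP.induct with
  | case1 =>
    rw [fibP, delta_rec 0, delta0, delta1]
  | case2 =>
    rw [fibP, delta_rec 1, delta_rec 0, delta0, delta1]
  | case3 n ih1 ih2 =>
    rw [fibP, delta_rec (n + 2), ih1, ih2]
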